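/- Let U : S(ℝⁿ) → S(ℝⁿ) be a bijection satisfying, for all f, g ∈ S(ℝⁿ): (1) U(f + ḡ) = U(f) + conj(U(g)), (2) U(f·g) = U(f)·U(g), (3) U(f ∗ g) = U(f) ∗ U(g). Suppose A : ℝⁿ → ℝⁿ is a bijection such that for every f ∈ S(ℝⁿ) and every x₀ ∈ ℝⁿ, f(x₀) = 0 if and only if Uf(A x₀) = 0, and suppose m : ℂ → ℂ satisfies U(c·f) = m(c) · Uf for all c ∈ ℂ and f ∈ S(ℝⁿ). Then Uf(A x₀) = m(f(x₀)) for every f ∈ S(ℝⁿ) and every x₀ ∈ ℝⁿ. -/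

import Mathlib

open MeasureTheory SchwartzMap Polynomial

noncomputable section StmtAux

lemma stmt13_poly_gauss_bound (p : Polynomial ℝ) :
    ∃ C : ℝ, ∀ x : ℝ, |p.eval x| * Real.exp (-(x ^ 2 / 2)) ≤ C := by
  induction p using Polynomial.induction_on' with
  | add p q hp hq =>
    obtain ⟨C₁, h₁⟩ := hp; obtain ⟨C₂, h₂⟩ := hq
    refine ⟨C₁ + C₂, fun x => ?_⟩
    calc |(p + q).eval x| * Real.exp (-(x ^ 2 / 2))
        ≤ (|p.eval x| + |q.eval x|) * Real.exp (-(x ^ 2 / 2)) := by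
          rw [Polynomial.eval_add]
          exact mul_le_mul_of_nonneg_right (abs_add_le _ _) (Real.exp_nonneg _)
      _ = |p.eval x| * Real.exp (-(x ^ 2 / 2)) + |q.eval x| * Real.exp (-(x ^ 2 / 2)) := by ring
      _ ≤ C₁ + C₂ := add_le_add (h₁ x) (h₂ x)
  | monomial k a =>
    refine ⟨|a| * (1 + 2 ^ k * k.factorial), fun x => ?_⟩
    have hexp : Real.exp (-(x ^ 2 / 2)) ≤ 1 := Real.exp_le_one_iff.2 (by nlinarith [sq_nonneg x])
    have hx : |x| ^ k * Real.exp (-(x ^ 2 / 2)) ≤ 1 + 2 ^ k * k.factorial := by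
      rcases le_total |x| 1 with h | h
      · have h1 : |x| ^ k ≤ 1 := pow_le_one₀ (abs_nonneg _) h
        have : |x| ^ k * Real.exp (-(x ^ 2 / 2)) ≤ 1 := by
          calc |x| ^ k * Real.exp (-(x ^ 2 / 2)) ≤ 1 * 1 :=
            mul_le_mul h1 hexp (Real.exp_nonneg _) zero_le_one
          _ = 1 := one_mul 1
        have hfac : (0:ℝ) ≤ 2 ^ k * k.factorial := by positivity
        linarith
      · have h2 : |x| ^ k ≤ |x| ^ (2 * k) := pow_le_pow_right₀ h (by omega)
        have h3 : |x| ^ (2 * k) = 2 ^ k * (x ^ 2 / 2) ^ k := by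
          rw [pow_mul, _root_.sq_abs, ← mul_pow]
          ring_nf
        have h4 : (x ^ 2 / 2) ^ k ≤ k.factorial * Real.exp (x ^ 2 / 2) := by
          have := Real.pow_div_factorial_le_exp (x := x ^ 2 / 2) (by positivity) k
          have hfac : (0:ℝ) < k.factorial := by positivity
          rw [div_le_iff₀ hfac] at this
          linarith [this]
        calc |x| ^ k * Real.exp (-(x ^ 2 / 2))
            ≤ 2 ^ k * (k.factorial * Real.exp (x ^ 2 / 2)) * Real.exp (-(x ^ 2 / 2)) := by
              have := h2.trans (le_of_eq h3)
              refine mul_le_mul_of_nonneg_right ?_ (Real.exp_nonneg _)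
              calc |x| ^ k ≤ 2 ^ k * (x ^ 2 / 2) ^ k := by rw [← h3]; exact h2
                _ ≤ 2 ^ k * (k.factorial * Real.exp (x ^ 2 / 2)) := by
                    exact mul_le_mul_of_nonneg_left h4 (by positivity)
          _ = 2 ^ k * k.factorial * (Real.exp (x ^ 2 / 2) * Real.exp (-(x ^ 2 / 2))) := by ring
          _ = 2 ^ k * k.factorial := by rw [← Real.exp_add]; simp
          _ ≤ 1 + 2 ^ k * k.factorial := by linarith
    rw [Polynomial.eval_monomial, abs_mul, _root_.abs_pow, mul_assoc]
    exact mul_le_mul_of_nonneg_left hx (abs_nonneg a)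

lemma stmt13_contDiff_gaussRe {nn : WithTop ℕ∞} :
    ContDiff ℝ nn (fun x : ℝ => Real.exp (-(x ^ 2 / 2))) :=
  Real.contDiff_exp.comp (((contDiff_id.pow 2).div_const 2).neg)

/-- The 1-D complex Gaussian as a Schwartz map. -/
def stmt13_gauss1 : SchwartzMap ℝ ℂ where
  toFun := fun x => Complex.ofRealLI (Real.exp (-(x ^ 2 / 2)))
  smooth' := Complex.ofRealCLM.contDiff.comp stmt13_contDiff_gaussRe
  decay' := by
    intro k N
    obtain ⟨C, hC⟩ := stmt13_poly_gauss_bound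
      ((X : Polynomial ℝ) ^ k * (Polynomial.hermite N).map (algebraMap ℤ ℝ))
    refine ⟨C, fun x => ?_⟩
    have h1 : ‖iteratedFDeriv ℝ N (fun x : ℝ => Complex.ofRealLI (Real.exp (-(x ^ 2 / 2)))) x‖
        = ‖iteratedFDeriv ℝ N (fun x : ℝ => Real.exp (-(x ^ 2 / 2))) x‖ := by
      exact Complex.ofRealLI.norm_iteratedFDeriv_comp_left (n := ((N : ℕ∞) : WithTop ℕ∞))
        (x := x) stmt13_contDiff_gaussRe.contDiffAt (i := N) le_rfl
    have h2 : ‖iteratedFDeriv ℝ N (fun x : ℝ => Real.exp (-(x ^ 2 / 2))) x‖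
        = |deriv^[N] (fun y : ℝ => Real.exp (-(y ^ 2 / 2))) x| := by
      rw [← iteratedDeriv_eq_iterate, norm_iteratedFDeriv_eq_norm_iteratedDeriv,
        Real.norm_eq_abs]
    rw [h1, h2, Polynomial.deriv_gaussian_eq_hermite_mul_gaussian]
    have key : |(-1 : ℝ) ^ N * (Polynomial.aeval x) (Polynomial.hermite N)
        * Real.exp (-(x ^ 2 / 2))|
        = |((Polynomial.hermite N).map (algebraMap ℤ ℝ)).eval x| * Real.exp (-(x ^ 2 / 2)) := by
      rw [abs_mul, abs_mul, _root_.abs_pow, abs_neg, abs_one, one_pow, one_mul,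
        abs_of_pos (Real.exp_pos _), Polynomial.aeval_def, ← Polynomial.eval_map]
    have hb := hC x
    rw [Polynomial.eval_mul, Polynomial.eval_pow, Polynomial.eval_X, abs_mul] at hb
    rw [Real.norm_eq_abs, key, ← mul_assoc, ← _root_.abs_pow]
    exact hb


variable {E : Type*} [NormedAddCommGroup E] [InnerProductSpace ℝ E]

lemma stmt13_tg_normsq :
    Function.HasTemperateGrowth (fun x : E => ‖x‖ ^ 2) := by
  have hderiv : ∀ x : E, HasFDerivAt (fun x : E => ‖x‖ ^ 2)
      (((2 : ℝ) • innerSL ℝ (E := E)) x) x := by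
    intro x
    have h := (hasFDerivAt_id x).inner ℝ (hasFDerivAt_id x)
    simp only [id_eq] at h
    have heq : (fun y : E => ‖y‖ ^ 2) = fun y : E => (@inner ℝ E _ y y) :=
      funext fun y => (real_inner_self_eq_norm_sq y).symm
    rw [heq]
    refine h.congr_fderiv ?_
    ext y
    simp [fderivInnerCLM_apply, real_inner_comm, two_mul]
  apply Function.HasTemperateGrowth.of_fderiv (k := 2) (C := 1)
  · have : fderiv ℝ (fun x : E => ‖x‖ ^ 2) = fun x => ((2 : ℝ) • innerSL ℝ (E := E)) x :=
      funext fun x => (hderiv x).fderiv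
    rw [this]
    exact ((2 : ℝ) • innerSL ℝ (E := E)).hasTemperateGrowth
  · exact fun x => (hderiv x).differentiableAt
  · intro x
    have h0 : (0:ℝ) ≤ ‖x‖ := norm_nonneg x
    simp only [norm_pow, norm_norm]
    nlinarith

/-- Gaussian-type Schwartz function on an inner product space. -/
def stmt13_gaussE : SchwartzMap E ℂ :=
  SchwartzMap.compCLM (𝕜 := ℝ) stmt13_tg_normsq
    ⟨1, 1, fun x => by
      have h0 : (0:ℝ) ≤ ‖x‖ := norm_nonneg x
      simp only [norm_pow, norm_norm, pow_one]
      nlinarith⟩ stmt13_gauss1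

lemma stmt13_gaussE_ne_zero (x : E) : stmt13_gaussE x ≠ 0 := by
  have h : stmt13_gaussE x = ((Real.exp (-((‖x‖ ^ 2) ^ 2 / 2)) : ℝ) : ℂ) := rfl
  rw [h]
  exact Complex.ofReal_ne_zero.2 (Real.exp_ne_zero _)

/-- Pointwise complex conjugate of a Schwartz map. -/
def stmt13_conj (g : SchwartzMap E ℂ) : SchwartzMap E ℂ where
  toFun := fun x => Complex.conjLIE (g x)
  smooth' := Complex.conjCLE.contDiff.comp g.smooth'
  decay' := by
    intro k N
    obtain ⟨C, hC⟩ := g.decay' k N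
    refine ⟨C, fun x => ?_⟩
    have h1 : ‖iteratedFDeriv ℝ N (fun x => Complex.conjLIE (g x)) x‖
        = ‖iteratedFDeriv ℝ N (⇑g) x‖ :=
      Complex.conjLIE.norm_iteratedFDeriv_comp_left (⇑g) x N
    rw [h1]; exact hC x

@[simp] lemma stmt13_conj_apply (g : SchwartzMap E ℂ) (x : E) :
    stmt13_conj g x = starRingEnd ℂ (g x) := rfl

lemma stmt13_tg_schwartz (g : SchwartzMap E ℂ) : Function.HasTemperateGrowth ⇑g := by
  refine ⟨g.smooth', fun N => ?_⟩
  obtain ⟨C, hC⟩ := g.decay' 0 N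
  refine ⟨0, C, fun x => ?_⟩
  have := hC x
  simp at this; simpa using (show ‖iteratedFDeriv ℝ N (⇑g) x‖ ≤ C from this)

/-- Pointwise product of Schwartz maps. -/
def stmt13_mul (f g : SchwartzMap E ℂ) : SchwartzMap E ℂ :=
  SchwartzMap.bilinLeftCLM (ContinuousLinearMap.mul ℝ ℂ) (stmt13_tg_schwartz g) f

@[simp] lemma stmt13_mul_apply (f g : SchwartzMap E ℂ) (x : E) :
    stmt13_mul f g x = f x * g x := rfl

end StmtAux

theorem stmt_13 (n : ℕ)
    (U : SchwartzMap (EuclideanSpace ℝ (Fin n)) ℂ → SchwartzMap (EuclideanSpace ℝ (Fin n)) ℂ)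
    (hUbij : Function.Bijective U)
    (h1 : ∀ f g h : SchwartzMap (EuclideanSpace ℝ (Fin n)) ℂ,
      (∀ x, h x = f x + starRingEnd ℂ (g x)) →
      ∀ x, U h x = U f x + starRingEnd ℂ (U g x))
    (h2 : ∀ f g h : SchwartzMap (EuclideanSpace ℝ (Fin n)) ℂ,
      (∀ x, h x = f x * g x) → ∀ x, U h x = U f x * U g x)
    (h3 : ∀ f g h : SchwartzMap (EuclideanSpace ℝ (Fin n)) ℂ,
      (∀ x, h x = ∫ y, f (x - y) * g y) →
      ∀ x, U h x = ∫ y, U f (x - y) * U g y)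
    (A : EuclideanSpace ℝ (Fin n) → EuclideanSpace ℝ (Fin n))
    (hAbij : Function.Bijective A)
    (hA : ∀ (f : SchwartzMap (EuclideanSpace ℝ (Fin n)) ℂ) (x₀ : EuclideanSpace ℝ (Fin n)),
      f x₀ = 0 ↔ U f (A x₀) = 0)
    (m : ℂ → ℂ)
    (hm : ∀ (c : ℂ) (f : SchwartzMap (EuclideanSpace ℝ (Fin n)) ℂ)
      (x : EuclideanSpace ℝ (Fin n)), U (c • f) x = m c * U f x) :
    ∀ (f : SchwartzMap (EuclideanSpace ℝ (Fin n)) ℂ) (x₀ : EuclideanSpace ℝ (Fin n)),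
      U f (A x₀) = m (f x₀) := by
  intro f x₀
  have hU0 : ∀ y, U 0 y = 0 := by
    intro y
    obtain ⟨x₁, rfl⟩ := hAbij.2 y
    exact (hA 0 x₁).1 (by simp)
  have hconj : ∀ (p : SchwartzMap (EuclideanSpace ℝ (Fin n)) ℂ) y,
      U (stmt13_conj p) y = starRingEnd ℂ (U p y) := by
    intro p y
    have h := h1 0 p (stmt13_conj p) (fun x => by simp) y
    rw [h, hU0, zero_add]
  set g : SchwartzMap (EuclideanSpace ℝ (Fin n)) ℂ :=
    ((stmt13_gaussE x₀)⁻¹ : ℂ) • stmt13_gaussE with hgdef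
  have hg1 : g x₀ = 1 := by
    rw [hgdef, SchwartzMap.smul_apply, smul_eq_mul]
    exact inv_mul_cancel₀ (stmt13_gaussE_ne_zero x₀)
  have hUg : U g (A x₀) ≠ 0 := by
    intro h
    have h0 := (hA g x₀).2 h
    rw [hg1] at h0; exact one_ne_zero h0
  have key : ∀ p : SchwartzMap (EuclideanSpace ℝ (Fin n)) ℂ,
      U p (A x₀) = -(starRingEnd ℂ (m (-(starRingEnd ℂ (p x₀))))) := by
    intro p
    set c : ℂ := p x₀ with hc
    set P := stmt13_mul p g with hP
    set g2 : SchwartzMap (EuclideanSpace ℝ (Fin n)) ℂ :=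
      (-(starRingEnd ℂ c)) • stmt13_conj g with hg2
    set Q : SchwartzMap (EuclideanSpace ℝ (Fin n)) ℂ := P - c • g with hQ
    have hQx : ∀ x, Q x = P x + starRingEnd ℂ (g2 x) := by
      intro x
      simp only [hQ, hg2, SchwartzMap.sub_apply, SchwartzMap.smul_apply, stmt13_conj_apply,
        smul_eq_mul, map_mul, map_neg, Complex.conj_conj]
      ring
    have hQ0 : Q x₀ = 0 := by
      rw [hQ, SchwartzMap.sub_apply, SchwartzMap.smul_apply, hP, stmt13_mul_apply, hg1]
      simp [← hc]
    have e1 := h1 P g2 Q hQx (A x₀)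
    rw [(hA Q x₀).1 hQ0, h2 p g P (fun x => rfl) (A x₀),
      hm (-(starRingEnd ℂ c)) (stmt13_conj g) (A x₀), hconj g (A x₀), map_mul,
      Complex.conj_conj] at e1
    have h5 : (U p (A x₀) + starRingEnd ℂ (m (-(starRingEnd ℂ c)))) * U g (A x₀) = 0 := by
      rw [add_mul]
      linear_combination -e1
    rcases mul_eq_zero.1 h5 with h | h
    · exact eq_neg_of_add_eq_zero_left h
    · exact absurd h hUg
  have hgg := key (stmt13_mul g g)
  rw [h2 g g _ (fun x => rfl) (A x₀)] at hgg
  have hgk := key g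
  rw [hg1] at hgk
  have hmul1 : (stmt13_mul g g) x₀ = 1 := by rw [stmt13_mul_apply, hg1, one_mul]
  rw [hmul1] at hgg
  have hUg1 : U g (A x₀) = 1 := by
    have hh : U g (A x₀) * U g (A x₀) = 1 * U g (A x₀) := by
      rw [hgg, ← hgk, one_mul]
    exact mul_right_cancel₀ hUg hh
  have hcg := key ((f x₀) • g)
  rw [hm (f x₀) g (A x₀), hUg1, mul_one] at hcg
  have hval : ((f x₀) • g) x₀ = f x₀ := by
    rw [SchwartzMap.smul_apply, hg1, smul_eq_mul, mul_one]
  rw [hval] at hcg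
  rw [key f, ← hcg]
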